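/- Let H be an infinite-dimensional Hilbert space and (a_n) a sequence of positive reals with Σ_{n=1}^∞ a_n^{-2} = ∞. Then there exists a sequence (x_n) in H with ‖x_n‖ = a_n for all n such that 0 is a weak cluster point of (x_n). In fact, one can take x_n = a_n e_n for an orthonormal sequence (e_n). -/

import Mathlib

open Filter Topology

/-- `x₀` is a weak cluster point of the sequence `x`. -/
def IsWeakClusterPt (𝕜 : Type*) {X : Type*} [RCLike 𝕜] [NormedAddCommGroup X]
    [NormedSpace 𝕜 X] (x₀ : X) (x : ℕ → X) : Prop :=
  ∀ (k : ℕ) (f : Fin k → X →L[𝕜] 𝕜) (ε : ℝ), 0 < ε → ∀ N : ℕ,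
    ∃ n ≥ N, ∀ i, ‖f i (x n) - f i x₀‖ < ε

theorem stmt4 {𝕜 H : Type*} [RCLike 𝕜] [NormedAddCommGroup H] [InnerProductSpace 𝕜 H]
    [CompleteSpace H] (hinf : ¬ FiniteDimensional 𝕜 H)
    (a : ℕ → ℝ) (ha : ∀ n, 0 < a n)
    (hdiv : ¬ Summable (fun n => (a n ^ 2)⁻¹)) :
    ∃ x : ℕ → H, (∀ n, ‖x n‖ = a n) ∧ IsWeakClusterPt 𝕜 0 x ∧
      ∃ e : ℕ → H, Orthonormal 𝕜 e ∧ ∀ n, x n = (a n : 𝕜) • e n := by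
  -- Get an orthonormal sequence
  obtain ⟨w, b, hb⟩ := exists_hilbertBasis 𝕜 H
  have hwinf : w.Infinite := by
    intro hfin
    apply hinf
    have hspan : Submodule.span 𝕜 w = ⊤ := by
      have hclosed : IsClosed (Submodule.span 𝕜 w : Set H) := by
        haveI : FiniteDimensional 𝕜 (Submodule.span 𝕜 w) :=
          FiniteDimensional.span_of_finite 𝕜 hfin
        exact (Submodule.span 𝕜 w).closed_of_finiteDimensional
      have hd := b.dense_span
      rw [hb, Subtype.range_coe] at hd
      rwa [hclosed.submodule_topologicalClosure_eq] at hd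
    haveI := hfin.fintype
    exact Module.Finite.of_basis (Module.Basis.mk
      (by
        have := b.orthonormal
        rw [hb] at this
        exact this.linearIndependent) (by rw [Subtype.range_coe, hspan]))
  haveI := hwinf.to_subtype
  set emb : ℕ ↪ w := hwinf.natEmbedding
  set e : ℕ → H := fun n => (emb n : H) with he
  have horth : Orthonormal 𝕜 e := by
    have := b.orthonormal
    rw [hb] at this
    exact this.comp emb emb.injective
  refine ⟨fun n => (a n : 𝕜) • e n, ?_, ?_, e, horth, fun n => rfl⟩
  · intro n
    rw [norm_smul, horth.1 n, mul_one, RCLike.norm_ofReal, abs_of_pos (ha n)]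
  · intro k f ε hε N
    by_contra hcon
    push_neg at hcon
    apply hdiv
    -- each f i is ⟪v i, ·⟫
    set v : Fin k → H := fun i => (InnerProductSpace.toDual 𝕜 H).symm (f i) with hv
    have hfv : ∀ i y, f i y = @inner 𝕜 _ _ (v i) y := fun i y =>
      (InnerProductSpace.toDual_symm_apply).symm
    have hsum : Summable (fun n => ∑ i, ‖f i (e n)‖ ^ 2) := by
      apply summable_sum
      intro i _
      simp_rw [hfv i, norm_inner_symm (𝕜 := 𝕜) (v i)]
      exact horth.inner_products_summable (v i)
    have hlow : ∀ n ≥ N, ε ^ 2 * (a n ^ 2)⁻¹ ≤ ∑ i, ‖f i (e n)‖ ^ 2 := by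
      intro n hn
      obtain ⟨i, hi⟩ := hcon n hn
      rw [map_zero, sub_zero] at hi
      have h1 : ε ≤ ‖f i ((a n : 𝕜) • e n)‖ := hi
      have h2 : ‖f i ((a n : 𝕜) • e n)‖ = a n * ‖f i (e n)‖ := by
        rw [map_smul, norm_smul]
        rw [RCLike.norm_ofReal, abs_of_pos (ha n)]
      have h3 : ε / a n ≤ ‖f i (e n)‖ := by
        rw [div_le_iff₀ (ha n)]
        rw [h2] at h1
        linarith
      calc ε ^ 2 * (a n ^ 2)⁻¹ = (ε / a n) ^ 2 := by
            rw [div_pow]; ring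
        _ ≤ ‖f i (e n)‖ ^ 2 := by
            apply pow_le_pow_left₀ (div_nonneg hε.le (ha n).le) h3
        _ ≤ ∑ j, ‖f j (e n)‖ ^ 2 := by
            apply Finset.single_le_sum (f := fun j => ‖f j (e n)‖ ^ 2)
              (fun j _ => by positivity) (Finset.mem_univ i)
    have hshift : Summable (fun n => ε ^ 2 * (a (n + N) ^ 2)⁻¹) := by
      apply (((summable_nat_add_iff N).mpr hsum).of_nonneg_of_le (fun n => by positivity))
      intro n
      exact hlow (n + N) (Nat.le_add_left N n)
    have : Summable (fun n => ε ^ 2 * (a n ^ 2)⁻¹) :=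
      (summable_nat_add_iff N).mp hshift
    have := this.mul_left (ε ^ 2)⁻¹
    simp_rw [← mul_assoc, inv_mul_cancel₀ (by positivity : (ε:ℝ) ^ 2 ≠ 0), one_mul] at this
    exact this
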